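/- Let (α_k)_{k≥1} be a sequence in 𝔻 and (a_k)_{k≥1} a sequence in 𝔻, with φ_k, φ*_k defined by the orthogonal rational function recurrence and a_0 = 1. Then for every n ≥ 1 the following identity of rational functions holds: ϖ_n φ*_n = conj(a_n) ϖ_n φ_n + Σ_{k=0}^{n−1} ( ∏_{j=k+1}^{n} ρ^−_j ) conj(a_k) ϖ_k φ_k. -/

import Mathlib

noncomputable section

/-- `ϖ_k(z) = 1 − conj(α_k) z`. -/
def pw (α : ℕ → ℂ) (k : ℕ) (z : ℂ) : ℂ := 1 - (starRingEnd ℂ) (α k) * z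

/-- `ϖ*_k(z) = z − α_k`. -/
def pws (α : ℕ → ℂ) (k : ℕ) (z : ℂ) : ℂ := z - α k

/-- `η_k = (1 − |α_k|²)^{1/2}`. -/
def etaS (α : ℕ → ℂ) (k : ℕ) : ℝ := Real.sqrt (1 - ‖α k‖ ^ 2)

/-- `ρ_k = (1 − |a_k|²)^{1/2}`. -/
def rhoS (a : ℕ → ℂ) (k : ℕ) : ℝ := Real.sqrt (1 - ‖a k‖ ^ 2)

/-- `ρ_k⁺ = (η_{k−1}/η_k) ρ_k`. -/
def rhoP (α a : ℕ → ℂ) (k : ℕ) : ℝ := etaS α (k - 1) / etaS α k * rhoS a k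

/-- `ρ_k⁻ = (η_k/η_{k−1}) ρ_k`. -/
def rhoM (α a : ℕ → ℂ) (k : ℕ) : ℝ := etaS α k / etaS α (k - 1) * rhoS a k

/-- `e_k = η_k/(η_{k−1} ρ_k)`. -/
def eS (α a : ℕ → ℂ) (k : ℕ) : ℝ := etaS α k / (etaS α (k - 1) * rhoS a k)

/-- The pair `(φ_k, φ*_k)` of orthogonal rational functions, defined by the recurrence. -/
def orfFun (α a : ℕ → ℂ) : ℕ → (ℂ → ℂ) × (ℂ → ℂ)
  | 0 => (fun _ => 1, fun _ => 1)
  | k + 1 =>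
    (fun z => (eS α a (k + 1) : ℂ) * (pw α k z / pw α (k + 1) z) *
        ((pws α k z / pw α k z) * (orfFun α a k).1 z + a (k + 1) * (orfFun α a k).2 z),
     fun z => (eS α a (k + 1) : ℂ) * (pw α k z / pw α (k + 1) z) *
        ((starRingEnd ℂ) (a (k + 1)) * (pws α k z / pw α k z) * (orfFun α a k).1 z +
          (orfFun α a k).2 z))

lemma etaS_pos (α : ℕ → ℂ) (k : ℕ) (h : ‖α k‖ < 1) : 0 < etaS α k :=
  Real.sqrt_pos.2 (by nlinarith [norm_nonneg (α k)])

lemma rhoS_pos (a : ℕ → ℂ) (k : ℕ) (h : ‖a k‖ < 1) : 0 < rhoS a k :=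
  Real.sqrt_pos.2 (by nlinarith [norm_nonneg (a k)])

lemma orf_key (α a : ℕ → ℂ) (n : ℕ) (z : ℂ)
    (hη1 : 0 < etaS α n) (_hη2 : 0 < etaS α (n + 1)) (hρ : ‖a (n + 1)‖ < 1)
    (h1 : pw α n z ≠ 0) (h2 : pw α (n + 1) z ≠ 0) :
    pw α (n + 1) z * (orfFun α a (n + 1)).2 z =
      (starRingEnd ℂ) (a (n + 1)) * pw α (n + 1) z * (orfFun α a (n + 1)).1 z +
        (rhoM α a (n + 1) : ℂ) * (pw α n z * (orfFun α a n).2 z) := by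
  have hρ0 : 0 < rhoS a (n + 1) := rhoS_pos a (n + 1) hρ
  have hsq : rhoS a (n + 1) ^ 2 = 1 - ‖a (n + 1)‖ ^ 2 :=
    Real.sq_sqrt (by nlinarith [norm_nonneg (a (n + 1))])
  have hr : eS α a (n + 1) * (1 - ‖a (n + 1)‖ ^ 2) = rhoM α a (n + 1) := by
    rw [eS, rhoM, ← hsq]
    simp only [Nat.add_sub_cancel]
    field_simp
  have hcc : (starRingEnd ℂ) (a (n + 1)) * a (n + 1) = ((‖a (n + 1)‖ ^ 2 : ℝ) : ℂ) := by
    rw [Complex.conj_mul']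
    push_cast
    ring
  have hE : (eS α a (n + 1) : ℂ) * (1 - (starRingEnd ℂ) (a (n + 1)) * a (n + 1)) =
      (rhoM α a (n + 1) : ℂ) := by
    have := congrArg (fun x : ℝ => (x : ℂ)) hr
    push_cast at this
    rw [hcc]
    push_cast
    linear_combination this
  have L : pw α (n + 1) z * ((eS α a (n + 1) : ℂ) * (pw α n z / pw α (n + 1) z) *
      ((starRingEnd ℂ) (a (n + 1)) * (pws α n z / pw α n z) * (orfFun α a n).1 z +
        (orfFun α a n).2 z)) =
      (eS α a (n + 1) : ℂ) * ((starRingEnd ℂ) (a (n + 1)) * pws α n z * (orfFun α a n).1 z +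
        pw α n z * (orfFun α a n).2 z) := by
    field_simp
  have R : pw α (n + 1) z * ((eS α a (n + 1) : ℂ) * (pw α n z / pw α (n + 1) z) *
      ((pws α n z / pw α n z) * (orfFun α a n).1 z + a (n + 1) * (orfFun α a n).2 z)) =
      (eS α a (n + 1) : ℂ) * (pws α n z * (orfFun α a n).1 z +
        a (n + 1) * pw α n z * (orfFun α a n).2 z) := by
    field_simp
  show pw α (n + 1) z * ((eS α a (n + 1) : ℂ) * (pw α n z / pw α (n + 1) z) *
      ((starRingEnd ℂ) (a (n + 1)) * (pws α n z / pw α n z) * (orfFun α a n).1 z +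
        (orfFun α a n).2 z)) =
    (starRingEnd ℂ) (a (n + 1)) * pw α (n + 1) z *
      ((eS α a (n + 1) : ℂ) * (pw α n z / pw α (n + 1) z) *
      ((pws α n z / pw α n z) * (orfFun α a n).1 z + a (n + 1) * (orfFun α a n).2 z)) +
      (rhoM α a (n + 1) : ℂ) * (pw α n z * (orfFun α a n).2 z)
  linear_combination L - (starRingEnd ℂ) (a (n + 1)) * R +
    (pw α n z * (orfFun α a n).2 z) * hE

/-- for every `n ≥ 1`, as an identity of rational functions (i.e. at every
point where the denominators `ϖ_k`, `k ≤ n`, do not vanish),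
`ϖ_n φ*_n = conj(a_n) ϖ_n φ_n + Σ_{k=0}^{n−1} (∏_{j=k+1}^{n} ρ⁻_j) conj(a_k) ϖ_k φ_k`. -/
theorem orf_superstar_expansion
    (α a : ℕ → ℂ) (hα0 : α 0 = 0) (ha0 : a 0 = 1)
    (hα : ∀ k, 1 ≤ k → ‖α k‖ < 1) (ha : ∀ k, 1 ≤ k → ‖a k‖ < 1)
    (n : ℕ) (hn : 1 ≤ n) (z : ℂ) (hz : ∀ k, k ≤ n → pw α k z ≠ 0) :
    pw α n z * (orfFun α a n).2 z =
      (starRingEnd ℂ) (a n) * pw α n z * (orfFun α a n).1 z +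
        ∑ k ∈ Finset.range n,
          (∏ j ∈ Finset.Icc (k + 1) n, (rhoM α a j : ℂ)) *
            (starRingEnd ℂ) (a k) * (pw α k z * (orfFun α a k).1 z) := by
  have hηpos : ∀ k, 0 < etaS α k := by
    intro k
    rcases Nat.eq_zero_or_pos k with rfl | hk
    · exact etaS_pos α 0 (by simp [hα0])
    · exact etaS_pos α k (hα k hk)
  induction n, hn using Nat.le_induction with
  | base =>
    have hkey := orf_key α a 0 z (hηpos 0) (hηpos 1) (ha 1 le_rfl)
      (hz 0 (by omega)) (hz 1 le_rfl)
    rw [hkey]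
    simp [orfFun, ha0, Finset.sum_range_one, Finset.Icc_self]
  | succ n hn IH =>
    have hz' : ∀ k, k ≤ n → pw α k z ≠ 0 := fun k hk => hz k (by omega)
    have hkey := orf_key α a n z (hηpos n) (hηpos (n + 1)) (ha (n + 1) (by omega))
      (hz' n le_rfl) (hz (n + 1) le_rfl)
    rw [hkey, IH hz', Finset.sum_range_succ]
    have hsum : ∀ k ∈ Finset.range n,
        (∏ j ∈ Finset.Icc (k + 1) (n + 1), (rhoM α a j : ℂ)) *
          (starRingEnd ℂ) (a k) * (pw α k z * (orfFun α a k).1 z) =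
        (rhoM α a (n + 1) : ℂ) * ((∏ j ∈ Finset.Icc (k + 1) n, (rhoM α a j : ℂ)) *
          (starRingEnd ℂ) (a k) * (pw α k z * (orfFun α a k).1 z)) := by
      intro k hk
      have hkn := Finset.mem_range.1 hk
      rw [Finset.prod_Icc_succ_top (by omega)]
      ring
    rw [Finset.sum_congr rfl hsum, ← Finset.mul_sum, Finset.Icc_self, Finset.prod_singleton]
    ring
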